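/- arXiv:2304.11932 — 2 statements merged into one kernel-verified Lean document; each statement's English description precedes it below -/
import Mathlib

section
/- For every word u over a finite alphabet A, if the rest r(u) of the arch factorization of u is the empty word, then ζ(u) = ι(u). -/
/-- The subword universality index `ι(u)`: the largest `k` such that every word of
length `k` over the alphabet `A` is a subword (subsequence) of `u`. -/
noncomputable def univIndex {A : Type*} (u : List A) : ℕ :=
  sSup {k : ℕ | ∀ w : List A, w.length = k → w.Sublist u}

/-- The circular subword universality index `ζ(u)`: the maximum of `ι(u')` over all
conjugates `u'` of `u` (equivalently, over all rotations of `u`). -/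
noncomputable def circIndex {A : Type*} (u : List A) : ℕ :=
  (Finset.range (u.length + 1)).sup fun i => univIndex (u.drop i ++ u.take i)

open Classical in
/-- The arch-jumping function `α` of a word `w`: `α(i)` is the least `j` such that the
factor `w(i,j)` contains every letter of the alphabet `A`, undefined if no such `j` exists. -/
noncomputable def alphaJump {A : Type*} (w : List A) (i : ℕ) : Option ℕ :=
  if ∃ j, ∀ a : A, a ∈ (w.take j).drop i then
    some (sInf {j : ℕ | ∀ a : A, a ∈ (w.take j).drop i})
  else none

/-- `αⁿ(i)`: the `n`-fold iteration of the arch-jumping function `α` of `w`, starting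
from position `i`; `none` if some intermediate step is undefined. -/
noncomputable def alphaIter {A : Type*} (w : List A) (n i : ℕ) : Option ℕ :=
  (fun o => o.bind (alphaJump w))^[n] (some i)

/-- The number of arches in the arch factorization of `w`:
the largest `n` such that `αⁿ(0)` is defined. -/
noncomputable def numArches {A : Type*} (w : List A) : ℕ :=
  sSup {n : ℕ | (alphaIter w n 0).isSome}

/-- The rest `r(w)` of the arch factorization of `w`: the suffix of `w` remaining after
its arches, i.e. after position `α^m(0)` where `m` is the number of arches. -/
noncomputable def archRest {A : Type*} (w : List A) : List A :=
  w.drop ((alphaIter w (numArches w) 0).getD 0)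


section Aux

variable {A : Type*}

/-- Richness of the factor `w[a..b)`. -/
def Rich (w : List A) (a b : ℕ) : Prop := ∀ x : A, x ∈ (w.take b).drop a

lemma rich_mono_left {w : List A} {a a' b : ℕ} (h : Rich w a' b) (ha : a ≤ a') :
    Rich w a b := by
  intro x
  have := h x
  rw [show a' = a + (a' - a) by omega, ← List.drop_drop] at this
  exact List.mem_of_mem_drop this

lemma rich_lt [Nonempty A] {w : List A} {a b : ℕ} (h : Rich w a b) : a < b := by
  by_contra hab
  push_neg at hab
  have := h (Classical.arbitrary A)
  rw [List.drop_eq_nil_iff.2 (by simp; omega)] at this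
  exact absurd this List.not_mem_nil

lemma jump_eq_some {w : List A} {i j : ℕ} (h : alphaJump w i = some j) :
    Rich w i j ∧ ∀ b, Rich w i b → j ≤ b := by
  unfold alphaJump at h
  split_ifs at h with hc
  · obtain ⟨j₀, hj₀⟩ := hc
    have hj : j = sInf {j : ℕ | ∀ a : A, a ∈ (w.take j).drop i} := (Option.some_inj.1 h).symm
    constructor
    · rw [hj]
      exact Nat.sInf_mem (⟨j₀, hj₀⟩ : Set.Nonempty {j : ℕ | ∀ a : A, a ∈ (w.take j).drop i})
    · intro b hb; rw [hj]; exact Nat.sInf_le hb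

lemma jump_of_rich {w : List A} {i b : ℕ} (h : Rich w i b) :
    ∃ j, alphaJump w i = some j := by
  unfold alphaJump
  rw [if_pos ⟨b, h⟩]
  exact ⟨_, rfl⟩

lemma jump_le_length {w : List A} {i j : ℕ} (h : alphaJump w i = some j) :
    j ≤ w.length := by
  obtain ⟨h1, h2⟩ := jump_eq_some h
  by_contra hlen
  push_neg at hlen
  have : Rich w i w.length := by
    intro x
    have := h1 x
    rwa [List.take_of_length_le (le_of_lt hlen), ← List.take_length (l := w)] at this
  exact absurd (h2 _ this) (by omega)

lemma jump_lt [Nonempty A] {w : List A} {i j : ℕ} (h : alphaJump w i = some j) :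
    i < j := rich_lt (jump_eq_some h).1

lemma iter_zero (w : List A) (i : ℕ) : alphaIter w 0 i = some i := rfl

lemma iter_succ (w : List A) (n i : ℕ) :
    alphaIter w (n + 1) i = (alphaIter w n i).bind (alphaJump w) := by
  unfold alphaIter
  rw [Function.iterate_succ_apply']

lemma iter_none (w : List A) (n : ℕ) :
    (fun o => o.bind (alphaJump w))^[n] (none : Option ℕ) = none := by
  induction n with
  | zero => rfl
  | succ n ih => rw [Function.iterate_succ_apply]; exact ih

lemma iter_succ_left (w : List A) (n i : ℕ) :
    alphaIter w (n + 1) i =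
      (alphaJump w i).elim none (fun j => alphaIter w n j) := by
  unfold alphaIter
  rw [Function.iterate_succ_apply]
  show (fun o => o.bind (alphaJump w))^[n] (alphaJump w i) = _
  cases alphaJump w i with
  | none => exact iter_none w n
  | some j => rfl

lemma iter_isSome_pred {w : List A} {n i : ℕ}
    (h : (alphaIter w (n + 1) i).isSome) : (alphaIter w n i).isSome := by
  rw [iter_succ] at h
  cases hn : alphaIter w n i with
  | none => rw [hn] at h; simp at h
  | some j => simp

lemma iter_isSome_mono {w : List A} {n k i : ℕ} (hk : k ≤ n)
    (h : (alphaIter w n i).isSome) : (alphaIter w k i).isSome := by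
  induction n with
  | zero =>
    have : k = 0 := Nat.le_zero.1 hk
    subst this
    exact h
  | succ n ih =>
    rcases Nat.lt_or_ge k (n+1) with h' | h'
    · exact ih (by omega) (iter_isSome_pred h)
    · have : k = n + 1 := by omega
      subst this
      exact h

lemma iter_ge [Nonempty A] {w : List A} {n i p : ℕ}
    (h : alphaIter w n i = some p) : i + n ≤ p := by
  induction n generalizing p with
  | zero =>
    rw [iter_zero, Option.some_inj] at h
    omega
  | succ n ih =>
    rw [iter_succ] at h
    cases hn : alphaIter w n i with
    | none => rw [hn] at h; simp at h
    | some q =>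
      rw [hn] at h
      rw [Option.bind_some] at h
      have := ih hn
      have := jump_lt h
      omega

lemma iter_le_length {w : List A} {n i p : ℕ}
    (h : alphaIter w (n + 1) i = some p) : p ≤ w.length := by
  rw [iter_succ] at h
  cases hn : alphaIter w n i with
  | none => rw [hn] at h; simp at h
  | some q =>
    rw [hn] at h
    rw [Option.bind_some] at h
    exact jump_le_length h

lemma numArches_bddAbove [Nonempty A] (w : List A) :
    BddAbove {n : ℕ | (alphaIter w n 0).isSome} := by
  refine ⟨w.length, fun n hn => ?_⟩
  cases n with
  | zero => exact Nat.zero_le _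
  | succ n =>
    obtain ⟨p, hp⟩ := Option.isSome_iff_exists.1 hn
    have h1 := iter_ge hp
    have h2 := iter_le_length hp
    omega

lemma iter_numArches_isSome [Nonempty A] (w : List A) :
    (alphaIter w (numArches w) 0).isSome :=
  Nat.sSup_mem ⟨0, by rw [Set.mem_setOf_eq, iter_zero]; rfl⟩ (numArches_bddAbove w)

lemma numArches_le [Nonempty A] {w : List A} {m : ℕ}
    (h : ¬ (alphaIter w (m + 1) 0).isSome) : numArches w ≤ m := by
  unfold numArches
  apply csSup_le ⟨0, by rw [Set.mem_setOf_eq, iter_zero]; rfl⟩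
  intro n hn
  rw [Set.mem_setOf_eq] at hn
  by_contra hnm
  push_neg at hnm
  exact h (iter_isSome_mono hnm hn)

lemma le_numArches [Nonempty A] {w : List A} {n : ℕ}
    (h : (alphaIter w n 0).isSome) : n ≤ numArches w :=
  le_csSup (numArches_bddAbove w) h

/-- concatenation of consecutive factors -/
lemma factor_append {w : List A} {i j p : ℕ} (hij : i ≤ j) (hjp : j ≤ p)
    (hjl : j ≤ w.length) :
    (w.take j).drop i ++ (w.take p).drop j = (w.take p).drop i := by
  have h1 : w.take p = w.take j ++ (w.take p).drop j := by
    nth_rewrite 1 [← List.take_append_drop j (w.take p)]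
    rw [List.take_take, min_eq_left hjp]
  nth_rewrite 2 [h1]
  rw [List.drop_append]
  have : i - (w.take j).length = 0 := by simp; omega
  rw [this, List.drop_zero]

/-- If the iterate is defined, any word of that length embeds into the prefix factor. -/
lemma sublist_of_iter [Nonempty A] {w : List A} :
    ∀ {n i p : ℕ}, alphaIter w n i = some p → ∀ x : List A, x.length = n →
      x.Sublist ((w.take p).drop i) := by
  intro n
  induction n with
  | zero =>
    intro i p h x hx
    rw [List.length_eq_zero_iff] at hx
    subst hx
    exact List.nil_sublist _
  | succ n ih =>
    intro i p h x hx
    rw [iter_succ_left] at h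
    cases hj : alphaJump w i with
    | none => rw [hj] at h; simp at h
    | some j =>
      rw [hj] at h
      simp only [Option.elim] at h
      cases x with
      | nil => simp at hx
      | cons a x' =>
        have hrich := (jump_eq_some hj).1
        have hij : i < j := jump_lt hj
        have hjl : j ≤ w.length := jump_le_length hj
        have hjp : j ≤ p := by have := iter_ge h; omega
        have h1 : [a].Sublist ((w.take j).drop i) :=
          List.singleton_sublist.2 (hrich a)
        have h2 : x'.Sublist ((w.take p).drop j) := ih h x' (by simpa using hx)
        have := h1.append h2
        rwa [factor_append (le_of_lt hij) hjp hjl] at this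

/-- If the iterate is undefined, some word of that length fails to embed. -/
lemma exists_not_sublist [Nonempty A] {w : List A} :
    ∀ {n i : ℕ}, alphaIter w n i = none →
      ∃ x : List A, x.length = n ∧ ¬ x.Sublist (w.drop i) := by
  intro n
  induction n with
  | zero => intro i h; rw [iter_zero] at h; simp at h
  | succ n ih =>
    intro i h
    rw [iter_succ_left] at h
    cases hj : alphaJump w i with
    | none =>
      -- suffix from i is not rich: some letter a missing
      have : ¬ Rich w i w.length := by
        intro hr
        obtain ⟨j, hj'⟩ := jump_of_rich hr
        rw [hj'] at hj; exact absurd hj (by simp)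
      rw [Rich] at this
      push_neg at this
      obtain ⟨a, ha⟩ := this
      rw [List.take_length] at ha
      refine ⟨List.replicate (n+1) a, by simp, fun hs => ?_⟩
      exact ha (hs.subset (List.mem_replicate.2 ⟨by omega, rfl⟩))
    | some j =>
      rw [hj] at h
      simp only [Option.elim] at h
      obtain ⟨x, hxl, hxs⟩ := ih h
      have hij : i < j := jump_lt hj
      have hjl : j ≤ w.length := jump_le_length hj
      -- j-1 is not a valid endpoint: some letter a missing in w[i..j-1)
      have hmin := (jump_eq_some hj).2
      have hnr : ¬ Rich w i (j - 1) := fun hr => by have := hmin _ hr; omega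
      rw [Rich] at hnr
      push_neg at hnr
      obtain ⟨a, ha⟩ := hnr
      refine ⟨a :: x, by simpa using hxl, fun hs => ?_⟩
      -- decompose drop i = w[i..j-1) ++ drop (j-1)
      have hd : w.drop i = (w.take (j-1)).drop i ++ w.drop (j-1) := by
        nth_rewrite 1 [← List.take_append_drop (j-1) w]
        rw [List.drop_append]
        have : i - (w.take (j-1)).length = 0 := by simp; omega
        rw [this, List.drop_zero]
      rw [hd] at hs
      rw [List.sublist_append_iff] at hs
      obtain ⟨l₁, l₂, heq, hs1, hs2⟩ := hs
      have hs2' : (a :: x).Sublist (w.drop (j-1)) := by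
        cases l₁ with
        | nil =>
          rw [List.nil_append] at heq
          rw [heq]
          exact hs2
        | cons b l₁' =>
          injection heq with h1 h2
          subst h1
          exact absurd (hs1.subset List.mem_cons_self) ha
      -- drop (j-1) = w[j-1] :: drop j
      have hj1 : j - 1 < w.length := by omega
      rw [List.drop_eq_getElem_cons hj1, show j - 1 + 1 = j by omega] at hs2'
      have : x.Sublist (w.drop j) := by
        cases hs2' with
        | cons _ h' => exact (List.sublist_cons_self a x).trans h'
        | cons_cons _ h' => exact h'
      exact hxs this

/-- The universality index equals the number of arches. -/
lemma univIndex_eq_numArches [Nonempty A] (w : List A) :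
    univIndex w = numArches w := by
  apply le_antisymm
  · unfold univIndex
    apply csSup_le ⟨0, by
      rw [Set.mem_setOf_eq]
      intro x hx
      rw [List.length_eq_zero_iff] at hx
      subst hx
      exact List.nil_sublist _⟩
    intro k hk
    rw [Set.mem_setOf_eq] at hk
    apply le_numArches
    cases h : alphaIter w k 0 with
    | none =>
      obtain ⟨x, hxl, hxs⟩ := exists_not_sublist h
      rw [List.drop_zero] at hxs
      exact absurd (hk x hxl) hxs
    | some p => simp
  · unfold univIndex numArches
    apply le_csSup
    · refine ⟨w.length, fun k hk => ?_⟩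
      rw [Set.mem_setOf_eq] at hk
      have := (hk (List.replicate k (Classical.arbitrary A)) (by simp)).length_le
      simpa using this
    · rw [Set.mem_setOf_eq]
      intro x hx
      obtain ⟨p, hp⟩ := Option.isSome_iff_exists.1 (iter_numArches_isSome w)
      have := sublist_of_iter hp x hx
      rw [List.drop_zero] at this
      exact this.trans (List.take_sublist _ _)

end Aux

/-- If the rest `r(u)` of the arch factorization of `u` is empty, then `ζ(u) = ι(u)`. -/
theorem circIndex_eq_univIndex_of_rest_nil {A : Type*} [Fintype A] [Nonempty A]
    (u : List A) (hr : archRest u = []) :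
    circIndex u = univIndex u := by
  classical
  set n := u.length with hn
  set m := numArches u with hm
  -- arch boundary positions
  have hiter : ∀ j ≤ m, (alphaIter u j 0).isSome :=
    fun j hj => iter_isSome_mono hj (iter_numArches_isSome u)
  set p : ℕ → ℕ := fun j => (alphaIter u j 0).getD 0 with hp
  have hpsome : ∀ j ≤ m, alphaIter u j 0 = some (p j) := by
    intro j hj
    obtain ⟨q, hq⟩ := Option.isSome_iff_exists.1 (hiter j hj)
    rw [hq]; simp [hp, hq]
  have hp0 : p 0 = 0 := by simp [hp, iter_zero]
  have hjump : ∀ j < m, alphaJump u (p j) = some (p (j+1)) := by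
    intro j hj
    have h1 := hpsome j (le_of_lt hj)
    have h2 := hpsome (j+1) hj
    rw [iter_succ, h1] at h2
    simpa using h2
  have hplt : ∀ j < m, p j < p (j+1) := fun j hj => jump_lt (hjump j hj)
  have hpub : ∀ j ≤ m, 1 ≤ j → p j ≤ n := by
    intro j hj h1
    obtain ⟨j', rfl⟩ := Nat.exists_eq_add_of_le h1
    exact iter_le_length (by rw [show 1 + j' = j' + 1 by omega] at hj ⊢; exact hpsome _ hj)
  have hrest : n ≤ p m := by
    rw [archRest, List.drop_eq_nil_iff] at hr
    exact hr
  -- if u = [] handle separately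
  rcases eq_or_ne u [] with rfl | hu
  · have : circIndex ([] : List A) = univIndex ([] : List A) := by
      rw [circIndex]
      simp
    exact this
  have hn0 : 0 < n := by simp [hn, List.length_pos_iff]; exact hu
  have hm1 : 1 ≤ m := by
    by_contra h
    have : m = 0 := by omega
    rw [this, hp0] at hrest
    omega
  have hpm : p m = n := le_antisymm (hpub m le_rfl hm1) hrest
  have hpmono : ∀ j k, j ≤ k → k ≤ m → p j ≤ p k := by
    intro j k hjk hkm
    induction k with
    | zero =>
      have : j = 0 := by omega
      rw [this]
    | succ k ih =>
      rcases Nat.lt_or_ge j (k+1) with h' | h'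
      · exact le_trans (ih (by omega) (by omega)) (le_of_lt (hplt k (by omega)))
      · have : j = k + 1 := by omega
        simp [this]
  -- key lemma R
  have lemR : ∀ j < m, ∀ a b, p j ≤ a → Rich u a b → p (j+1) ≤ b := by
    intro j hj a b hpa hr'
    exact (jump_eq_some (hjump j hj)).2 b (rich_mono_left hr' hpa)
  -- boundary positions of u ++ u
  set P : ℕ → ℕ := fun j => if j ≤ m then p j else n + p (j - m) with hP
  have lemRv : ∀ j < 2*m, ∀ a b, Rich (u ++ u) a b → b ≤ 2*n → P j ≤ a → P (j+1) ≤ b := by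
    intro j hj a b hrich hb2 hPa
    have hab : a < b := rich_lt hrich
    rcases Nat.lt_or_ge j m with hjm | hjm
    · -- first copy
      have hPj : P j = p j := by simp [hP, le_of_lt hjm]
      have hPj1 : P (j+1) = p (j+1) := by
        have h1 : j + 1 ≤ m := hjm
        simp [hP, h1]
      rw [hPj1]
      rcases Nat.lt_or_ge n b with hbn | hbn
      · -- b > n : trivial since p (j+1) ≤ n
        have := hpub (j+1) hjm (by omega)
        omega
      · -- b ≤ n : richness in u
        have : Rich u a b := by
          intro x
          have := hrich x
          rwa [List.take_append, Nat.sub_eq_zero_of_le hbn,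
            List.take_zero, List.append_nil] at this
        exact lemR j hjm a b (by rw [hPj] at hPa; exact hPa) this
    · -- second copy
      have hjm2 : j - m < m := by omega
      have hPj : P j = n + p (j - m) := by
        rcases Nat.lt_or_ge m j with h' | h'
        · simp [hP]; omega
        · have : j = m := by omega
          subst this
          simp [hP, hp0, hpm]
      have hPj1 : P (j+1) = n + p (j - m + 1) := by
        have : ¬ (j + 1 ≤ m) := by omega
        simp [hP, this, show j + 1 - m = j - m + 1 by omega]
      have han : n ≤ a := by rw [hPj] at hPa; omega
      have hbn : n ≤ b := by omega
      -- factor identity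
      have hfac : ((u ++ u).take b).drop a = (u.take (b - n)).drop (a - n) := by
        rw [List.take_append, List.take_of_length_le (by rw [← hn]; omega),
          List.drop_append, List.drop_eq_nil_iff.2 (by rw [← hn]; omega),
          List.nil_append, ← hn]
      have : Rich u (a - n) (b - n) := by
        intro x
        have := hrich x
        rwa [hfac] at this
      have := lemR (j - m) hjm2 (a - n) (b - n) (by rw [hPj] at hPa; omega) this
      rw [hPj1]
      omega
  -- main rotation bound
  have key : ∀ i < n, numArches (u.drop i ++ u.take i) ≤ m := by
    intro i hi
    set w' : List A := u.drop i ++ u.take i with hw'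
    have hlw' : w'.length = n := by
      simp [hw', hn]
      omega
    apply numArches_le
    intro hsome
    -- find j₀
    set T : Set ℕ := {j | j ≤ m ∧ p j ≤ i} with hT
    have hT0 : (0 : ℕ) ∈ T := ⟨Nat.zero_le _, by simp [hp0]⟩
    have hTb : BddAbove T := ⟨m, fun j hj => hj.1⟩
    set j₀ := sSup T with hj₀
    have hj₀T : j₀ ∈ T := Nat.sSup_mem ⟨0, hT0⟩ hTb
    have hj₀m : j₀ < m := by
      rcases Nat.lt_or_ge j₀ m with h' | h'
      · exact h'
      · have hje : j₀ = m := le_antisymm hj₀T.1 h'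
        have h2 := hj₀T.2
        rw [hje, hpm] at h2
        omega
    have hj₀i : i < p (j₀ + 1) := by
      by_contra h'
      push_neg at h'
      have : j₀ + 1 ∈ T := ⟨hj₀m, h'⟩
      have := le_csSup hTb this
      omega
    -- the chain in w'
    have htiter : ∀ k ≤ m + 1, (alphaIter w' k 0).isSome :=
      fun k hk => iter_isSome_mono hk hsome
    set t : ℕ → ℕ := fun k => (alphaIter w' k 0).getD 0 with ht
    have htsome : ∀ k ≤ m + 1, alphaIter w' k 0 = some (t k) := by
      intro k hk
      obtain ⟨q, hq⟩ := Option.isSome_iff_exists.1 (htiter k hk)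
      rw [hq]; simp [ht, hq]
    have htjump : ∀ k < m + 1, alphaJump w' (t k) = some (t (k+1)) := by
      intro k hk
      have h1 := htsome k (le_of_lt hk)
      have h2 := htsome (k+1) hk
      rw [iter_succ, h1] at h2
      simpa using h2
    have htlen : ∀ k ≤ m + 1, 1 ≤ k → t k ≤ n := by
      intro k hk h1
      have := jump_le_length (htjump (k-1) (by omega))
      rw [hlw'] at this
      rwa [show k - 1 + 1 = k by omega] at this
    -- rich transfer
    have htrans : ∀ a b, b ≤ n → Rich w' a b → Rich (u ++ u) (i + a) (i + b) := by
      intro a b hbn hr' x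
      have hx := hr' x
      -- w' = ((u ++ u).drop i).take n
      have hw'' : w' = ((u ++ u).drop i).take n := by
        rw [List.drop_append, Nat.sub_eq_zero_of_le (le_of_lt hi),
          List.drop_zero, List.take_append,
          List.take_of_length_le (by rw [List.length_drop, ← hn]; omega),
          List.length_drop, ← hn, Nat.sub_sub_self (le_of_lt hi)]
      have e1 : (w'.take b).drop a = ((u ++ u).drop (i + a)).take (b - a) := by
        rw [hw'', List.take_take, min_eq_left hbn, List.drop_take, List.drop_drop]
      have e2 : (((u ++ u)).take (i + b)).drop (i + a) = ((u ++ u).drop (i + a)).take (b - a) := by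
        rw [List.drop_take, show i + b - (i + a) = b - a by omega]
      rw [e1] at hx
      rwa [e2]
    -- induction: P (j₀ + k) ≤ i + t k
    have hind : ∀ k ≤ m + 1, P (j₀ + k) ≤ i + t k := by
      intro k
      induction k with
      | zero =>
        intro _
        have ht0 : t 0 = 0 := by simp [ht, iter_zero]
        rw [ht0]
        have : P j₀ = p j₀ := by simp [hP, hj₀T.1]
        rw [Nat.add_zero, this, Nat.add_zero]
        exact hj₀T.2
      | succ k ih =>
        intro hk
        have hk' : k ≤ m + 1 := by omega
        have hr' : Rich w' (t k) (t (k+1)) := (jump_eq_some (htjump k (by omega))).1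
        have hb : t (k+1) ≤ n := htlen (k+1) hk (by omega)
        have hrv := htrans _ _ hb hr'
        have := lemRv (j₀ + k) (by omega) (i + t k) (i + t (k+1)) hrv (by omega)
          (ih hk')
        rwa [show j₀ + k + 1 = j₀ + (k + 1) by omega] at this
    have hfin := hind (m+1) le_rfl
    have hPfin : P (j₀ + (m + 1)) = n + p (j₀ + 1) := by
      have h1 : ¬ (j₀ + (m + 1) ≤ m) := by omega
      simp [hP, h1, show j₀ + (m + 1) - m = j₀ + 1 by omega]
    rw [hPfin] at hfin
    have := htlen (m+1) le_rfl (by omega)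
    omega
  -- conclude
  apply le_antisymm
  · apply Finset.sup_le
    intro i hi
    rw [Finset.mem_range] at hi
    rcases Nat.lt_or_ge i n with h' | h'
    · rw [univIndex_eq_numArches, univIndex_eq_numArches]
      exact key i h'
    · have : i = n := by omega
      subst this
      rw [List.drop_length, List.take_length, List.nil_append]
  · have h0 : (0 : ℕ) ∈ Finset.range (u.length + 1) := Finset.mem_range.2 (by omega)
    have := Finset.le_sup (f := fun i => univIndex (u.drop i ++ u.take i)) h0
    simpa [circIndex] using this
end

section
/- Let u = a₁⋯a_ℓ be a rich word over a finite alphabet A with arch factorization s₁⋯s_m·r. Then there exist a letter a ∈ A and a position d = min{i | a_i = a} (the position of the first occurrence of a in u) with 0 < d ≤ |s₁| such that ζ(u) = ι(u^{∼d}), where u^{∼d} is the d-th conjugate of u. -/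
/-- The length `λ₁ = |s₁|` of the first arch of a (rich) word `u`:
the least `j` such that the prefix `u(0,j)` contains every letter of `A`. -/
noncomputable def firstArchLen {A : Type*} (u : List A) : ℕ :=
  sInf {j : ℕ | ∀ a : A, a ∈ u.take j}


section Aux

variable {A : Type*}

/-- `IsUnivP m v` : every word of length `m` is a subsequence of `v`. -/
def IsUnivP {A : Type*} (m : ℕ) (v : List A) : Prop := ∀ w : List A, w.length = m → w.Sublist v

lemma sub_peel : ∀ (y : List A) {b : A} {w z : List A}, b ∉ y → (b :: w).Sublist (y ++ b :: z) → w.Sublist z := by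
  intro y
  induction y with
  | nil =>
    intro b w z _ h
    simp only [List.nil_append] at h
    cases h with
    | cons _ h => exact (List.sublist_cons_self b w).trans h
    | cons_cons _ h => exact h
  | cons a y ih =>
    intro b w z hb h
    simp only [List.cons_append] at h
    cases h with
    | cons _ h => exact ih (fun hm => hb (List.mem_cons_of_mem _ hm)) h
    | cons_cons _ h => exact absurd List.mem_cons_self hb

lemma isUnivP_prepend {m : ℕ} {z : List A} (y : List A) (h : IsUnivP m z) : IsUnivP m (y ++ z) :=
  fun w hw => (h w hw).trans (List.sublist_append_right y z)

lemma isUnivP_add {a b : ℕ} {x y : List A} (hx : IsUnivP a x) (hy : IsUnivP b y) :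
    IsUnivP (a + b) (x ++ y) := by
  intro w hw
  have h1 : (w.take a).Sublist x := hx _ (by rw [List.length_take]; omega)
  have h2 : (w.drop a).Sublist y := hy _ (by rw [List.length_drop]; omega)
  have := h1.append h2
  rwa [List.take_append_drop] at this

lemma isUnivP_join : ∀ (S : List (List A)) (r : List A), (∀ s ∈ S, ∀ a : A, a ∈ s) →
    IsUnivP S.length (S.flatten ++ r) := by
  intro S
  induction S with
  | nil => intro r _ w hw; rw [List.length_eq_zero_iff.mp hw]; exact List.nil_sublist _
  | cons s S ih =>
    intro r hrich w hw
    match w with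
    | [] => simp at hw
    | b :: w' =>
      have hb : ([b]).Sublist s := List.singleton_sublist.mpr (hrich s List.mem_cons_self b)
      have hw' : w'.Sublist (S.flatten ++ r) := ih r (fun t ht => hrich t (List.mem_cons_of_mem _ ht)) w'
        (by simpa using hw)
      have := hb.append hw'
      simpa [List.append_assoc] using this

lemma arch_decomp [Nonempty A] : ∀ (m : ℕ) (v : List A), IsUnivP m v →
    ∃ (S : List (List A)) (r : List A), v = S.flatten ++ r ∧ S.length = m ∧
      ∀ s ∈ S, (∀ a : A, a ∈ s) ∧ ∃ (s' : List A) (b : A), s = s' ++ [b] ∧ b ∉ s' := by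
  intro m
  induction m with
  | zero => exact fun v _ => ⟨[], v, by simp, rfl, by simp⟩
  | succ m ih =>
    intro v hU
    have hrich : ∀ a : A, a ∈ v := by
      intro a
      have h := hU (List.replicate (m+1) a) (by simp)
      exact h.subset (by simp)
    set J := {j : ℕ | ∀ a : A, a ∈ v.take j} with hJ
    have hJne : v.length ∈ J := by
      intro a; rw [List.take_length]; exact hrich a
    have hmem : sInf J ∈ J := Nat.sInf_mem ⟨_, hJne⟩
    set lam := sInf J with hlam
    have hlam_le : lam ≤ v.length := Nat.sInf_le hJne
    have hlam_pos : 0 < lam := by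
      rcases Nat.eq_zero_or_pos lam with h | h
      · exfalso
        have := hmem (Classical.arbitrary A)
        rw [h] at this; simp at this
      · exact h
    have hnot : lam - 1 ∉ J := Nat.notMem_of_lt_sInf (by omega)
    rw [hJ, Set.mem_setOf_eq] at hnot
    push_neg at hnot
    obtain ⟨b, hb⟩ := hnot
    have hidx : lam - 1 < v.length := by omega
    have htake : v.take lam = v.take (lam-1) ++ [v[lam-1]] := by
      conv_lhs => rw [show lam = (lam - 1) + 1 by omega]
      rw [List.take_succ]
      simp [List.getElem?_eq_getElem hidx]
    have hbv : b = v[lam-1] := by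
      have hbmem : b ∈ v.take lam := hmem b
      rw [htake] at hbmem
      rcases List.mem_append.mp hbmem with h | h
      · exact absurd h hb
      · simpa using h
    have hUd : IsUnivP m (v.drop lam) := by
      intro w hw
      have h1 : (b :: w).Sublist v := hU (b :: w) (by simp [hw])
      have hv2 : v = v.take (lam-1) ++ b :: v.drop lam := by
        conv_lhs => rw [← List.take_append_drop lam v]
        rw [htake, hbv, List.append_assoc, List.singleton_append]
      rw [hv2] at h1
      exact sub_peel _ hb h1
    obtain ⟨S, r, h1, h2, h3⟩ := ih _ hUd
    refine ⟨v.take lam :: S, r, ?_, by simp [h2], ?_⟩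
    · show v = v.take lam ++ S.flatten ++ r
      rw [List.append_assoc, ← h1, List.take_append_drop]
    · intro s hs
      rcases List.mem_cons.mp hs with h | h
      · subst h
        exact ⟨hmem, v.take (lam-1), v[lam-1], htake, hbv ▸ hb⟩
      · exact h3 s h

lemma locate : ∀ (S : List (List A)) (p : ℕ), (∀ s ∈ S, s ≠ []) → p < S.flatten.length →
    ∃ (S₁ : List (List A)) (s : List A) (S₂ : List (List A)),
      S = S₁ ++ s :: S₂ ∧ S₁.flatten.length ≤ p ∧ p < S₁.flatten.length + s.length := by
  intro S
  induction S with
  | nil => intro p _ h; simp at h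
  | cons s S ih =>
    intro p hne h
    by_cases hp : p < s.length
    · exact ⟨[], s, S, by simp, by simp, by simpa using hp⟩
    · push_neg at hp
      have h' : p - s.length < S.flatten.length := by
        simp only [List.flatten_cons, List.length_append] at h; omega
      obtain ⟨S₁, t, S₂, e1, e2, e3⟩ := ih (p - s.length)
        (fun x hx => hne x (List.mem_cons_of_mem _ hx)) h'
      refine ⟨s :: S₁, t, S₂, by rw [e1]; rfl, ?_, ?_⟩
      · simp only [List.flatten_cons, List.length_append]; omega
      · simp only [List.flatten_cons, List.length_append]; omega

lemma descent [Nonempty A] (u : List A) (m e : ℕ) (he2 : e ≤ u.length)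
    (c : A) (hce : u.take e = u.take (e-1) ++ [c]) (hcmem : c ∈ u.take (e-1))
    (hU : IsUnivP m (u.rotate e)) :
    ∃ e', 1 ≤ e' ∧ e' < e ∧ IsUnivP m (u.rotate e') := by
  have he1 : 2 ≤ e := by
    by_contra h
    have h0 : e - 1 = 0 := by omega
    rw [h0] at hcmem
    simp at hcmem
  set l := u.length with hldef
  have hl2 : 2 ≤ l := le_trans he1 he2
  set v := u.rotate e with hvdef
  have hvlen : v.length = l := List.length_rotate u e
  have hv : v = u.drop e ++ u.take e := List.rotate_eq_drop_append_take he2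
  set p0 := l - e with hp0
  have hdl : (u.drop e).length = p0 := by rw [List.length_drop]
  have hvdrop : v.drop p0 = u.take e := by rw [hv, ← hdl, List.drop_left]
  obtain ⟨S, r, hjoin, hSlen, harch⟩ := arch_decomp m v hU
  have hrot : ∀ P, p0 < P → P < l → IsUnivP m (v.drop P ++ v.take P) →
      ∃ e', 1 ≤ e' ∧ e' < e ∧ IsUnivP m (u.rotate e') := by
    intro P h1 h2 h3
    refine ⟨P - p0, by omega, by omega, ?_⟩
    have hcomp : v.rotate P = u.rotate (P - p0) := by
      rw [hvdef, List.rotate_rotate]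
      have he' : e + P = l + (P - p0) := by omega
      rw [he', ← List.rotate_rotate, hldef, List.rotate_length]
    rw [← hcomp]
    have : v.rotate P = v.drop P ++ v.take P :=
      List.rotate_eq_drop_append_take (by omega)
    rwa [this]
  by_cases hT : S.flatten.length ≤ p0
  · -- cut at p0 + 1, lands in the rest r
    apply hrot (p0+1) (by omega) (by omega)
    have htk : v.take (p0+1) = S.flatten ++ r.take (p0+1 - S.flatten.length) := by
      rw [hjoin, List.take_append, List.take_of_length_le (by omega)]
    rw [htk]
    exact isUnivP_prepend _ (by
      have := isUnivP_join S (r.take (p0+1 - S.flatten.length)) (fun s hs => (harch s hs).1)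
      rwa [hSlen] at this)
  · push_neg at hT
    obtain ⟨S₁, s, S₂, hS, h1, h2⟩ := locate S p0
      (fun s hs => by obtain ⟨_, s', b, rfl, _⟩ := harch s hs; simp) hT
    set P := S₁.flatten.length + s.length with hP
    have hvsplit : v = (S₁.flatten ++ s) ++ (S₂.flatten ++ r) := by
      rw [hjoin, hS]
      simp [List.flatten_append, List.append_assoc]
    have hlen_eq : l = P + (S₂.flatten.length + r.length) := by
      have := congrArg List.length hvsplit
      rw [hvlen] at this
      simp only [List.length_append] at this
      omega
    by_cases hPl : P < l
    · -- cut at P, the end of arch s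
      apply hrot P (by omega) hPl
      have hPlen : (S₁.flatten ++ s).length = P := by simp [hP]
      have hd : v.drop P = S₂.flatten ++ r := by rw [hvsplit, ← hPlen, List.drop_left]
      have ht : v.take P = S₁.flatten ++ s := by rw [hvsplit, ← hPlen, List.take_left]
      rw [hd, ht]
      have hA : IsUnivP S₂.length (S₂.flatten ++ r) :=
        isUnivP_join S₂ r (fun t ht => (harch t (by rw [hS]; simp [ht])).1)
      have hB : IsUnivP (S₁.length + 1) (S₁.flatten ++ s) := by
        have := isUnivP_join (S₁ ++ [s]) []
          (fun t ht => (harch t (by rw [hS]; rcases List.mem_append.mp ht with h | h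
                                    · exact List.mem_append_left _ h
                                    · simp at h; subst h; simp)).1)
        simpa [List.flatten_append] using this
      have htot := isUnivP_add hA hB
      have hm : S₂.length + (S₁.length + 1) = m := by
        rw [← hSlen, hS]; simp [List.length_append]; omega
      rwa [hm] at htot
    · -- P = l : contradiction with first-occurrence failure
      exfalso
      have hPeq : P = l := by omega
      have hS2r : S₂.flatten.length + r.length = 0 := by omega
      have hvs : v = S₁.flatten ++ s := by
        rw [hvsplit, List.eq_nil_of_length_eq_zero (by simp only [List.length_append]; omega : (S₂.flatten ++ r).length = 0)]
        simp
      obtain ⟨hrich_s, s', b, hsb, hbs⟩ := harch s (by rw [hS]; exact List.mem_append_right _ List.mem_cons_self)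
      set k := p0 - S₁.flatten.length with hk
      have hdrop : u.take e = s.drop k := by
        rw [← hvdrop, hvs, List.drop_append,
          List.drop_eq_nil_of_le h1, List.nil_append, hk]
      have hlens : (u.take e).length = e := by rw [List.length_take]; omega
      have hks : k ≤ s'.length := by
        have h5 := congrArg List.length hdrop
        rw [hlens, List.length_drop, hsb, List.length_append] at h5
        simp at h5
        omega
      have hsplit2 : u.take (e-1) ++ [c] = s'.drop k ++ [b] := by
        rw [← hce, hdrop, hsb, List.drop_append,
          show k - s'.length = 0 by omega, List.drop_zero]
      have := List.append_inj' hsplit2 (by simp)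
      obtain ⟨heq1, heq2⟩ := this
      have hcb : c = b := by simpa using heq2
      apply hbs
      rw [← hcb]
      exact (List.drop_sublist k s').subset (heq1 ▸ hcmem)

lemma univBdd [Nonempty A] (u : List A) :
    BddAbove {k : ℕ | ∀ w : List A, w.length = k → w.Sublist u} := by
  refine ⟨u.length, fun k hk => ?_⟩
  have := hk (List.replicate k (Classical.arbitrary A)) List.length_replicate
  simpa using this.length_le

lemma isUnivP_univIndex [Nonempty A] (u : List A) : IsUnivP (univIndex u) u := by
  have h0 : (0:ℕ) ∈ {k : ℕ | ∀ w : List A, w.length = k → w.Sublist u} := by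
    intro w hw
    rw [List.length_eq_zero_iff.mp hw]
    exact List.nil_sublist _
  exact Nat.sSup_mem ⟨0, h0⟩ (univBdd u)

lemma le_univIndex [Nonempty A] {u : List A} {m : ℕ} (h : IsUnivP m u) : m ≤ univIndex u :=
  le_csSup (univBdd u) h

variable [DecidableEq A]

lemma indexOf_lt_of_mem_take {a : A} : ∀ {u : List A} {j : ℕ}, a ∈ u.take j → u.idxOf a < j := by
  intro u
  induction u with
  | nil => intro j h; simp at h
  | cons x u ih =>
    intro j h
    cases j with
    | zero => simp at h
    | succ j =>
      rw [List.take_succ_cons] at h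
      by_cases hx : a = x
      · subst hx; simp [List.idxOf_cons_self]
      · rcases List.mem_cons.mp h with h' | h'
        · exact absurd h' hx
        · have := ih h'
          rw [List.idxOf_cons_ne _ (by exact fun he => hx he.symm)]
          omega

lemma mem_take_of_indexOf_lt {a : A} : ∀ {u : List A} {j : ℕ}, a ∈ u → u.idxOf a < j → a ∈ u.take j := by
  intro u
  induction u with
  | nil => intro j h; simp at h
  | cons x u ih =>
    intro j hmem hlt
    by_cases hx : a = x
    · subst hx
      cases j with
      | zero => simp [List.idxOf_cons_self] at hlt
      | succ j => simp
    · rw [List.idxOf_cons_ne _ (fun he => hx he.symm)] at hlt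
      cases j with
      | zero => omega
      | succ j =>
        rw [List.take_succ_cons]
        have hmem' : a ∈ u := by
          rcases List.mem_cons.mp hmem with h|h
          · exact absurd h hx
          · exact h
        exact List.mem_cons_of_mem _ (ih hmem' (by omega))

end Aux

/-- For a rich word `u`, the circular universality index `ζ(u)` is attained by a conjugate
`u^{∼d}` where `0 < d ≤ |s₁|` and `d` is the (1-based) position of the first occurrence of
some letter `a` in `u`, i.e. `d = min{i | aᵢ = a}`. -/
theorem circIndex_attained_after_first_occurrence {A : Type*} [Fintype A] [Nonempty A]
    [DecidableEq A] (u : List A) (hrich : ∀ a : A, a ∈ u) :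
    ∃ (a : A) (d : ℕ), d = u.idxOf a + 1 ∧ 0 < d ∧ d ≤ firstArchLen u ∧
      circIndex u = univIndex (u.drop d ++ u.take d) := by
  classical
  have hlpos : 0 < u.length := List.length_pos_of_mem (hrich (Classical.arbitrary A))
  have hJl : ∀ a : A, a ∈ u.take u.length := by
    intro a; rw [List.take_length]; exact hrich a
  have hfa_mem : ∀ a : A, a ∈ u.take (firstArchLen u) :=
    Nat.sInf_mem (⟨u.length, hJl⟩ : Set.Nonempty {j : ℕ | ∀ a : A, a ∈ u.take j})
  have hfa_le : firstArchLen u ≤ u.length := Nat.sInf_le hJl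
  -- maximizer of the sup
  obtain ⟨i, hi_mem, hi_eq⟩ := Finset.exists_mem_eq_sup (Finset.range (u.length + 1))
    (by simp) (fun i => univIndex (u.drop i ++ u.take i))
  have hi_le : i ≤ u.length := by
    have := Finset.mem_range.mp hi_mem; omega
  set M := circIndex u with hM
  have hMi : M = univIndex (u.drop i ++ u.take i) := hi_eq
  set i₀ := if i = 0 then u.length else i with hi₀
  have hi₀1 : 1 ≤ i₀ := by rw [hi₀]; split <;> omega
  have hi₀2 : i₀ ≤ u.length := by rw [hi₀]; split <;> omega
  have hroti : u.rotate i₀ = u.drop i ++ u.take i := by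
    rw [hi₀]
    split
    · rename_i h; subst h
      rw [List.rotate_length]; simp
    · exact List.rotate_eq_drop_append_take hi_le
  have hIU : IsUnivP M (u.rotate i₀) := by
    rw [hroti, hMi]
    exact isUnivP_univIndex _
  -- descent to a first-occurrence position
  have main : ∀ e, 1 ≤ e → e ≤ u.length → IsUnivP M (u.rotate e) →
      ∃ d, 1 ≤ d ∧ d ≤ u.length ∧ (∃ hd : d - 1 < u.length, u.idxOf (u[d-1]) = d - 1) ∧
        IsUnivP M (u.rotate d) := by
    intro e
    induction e using Nat.strong_induction_on with
    | _ e ih =>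
      intro h1 h2 h3
      have hdlt : e - 1 < u.length := by omega
      by_cases hfo : u.idxOf (u[e-1]) = e - 1
      · exact ⟨e, h1, h2, ⟨hdlt, hfo⟩, h3⟩
      · set c := u[e-1] with hc
        have hcmem_e : c ∈ u.take e := by
          have hh : (u.take e)[e-1]'(by rw [List.length_take]; omega) = c :=
            List.getElem_take
          exact hh ▸ List.getElem_mem _
        have hlt : u.idxOf c < e := indexOf_lt_of_mem_take hcmem_e
        have hlt' : u.idxOf c < e - 1 := by omega
        have hcmem : c ∈ u.take (e-1) :=
          mem_take_of_indexOf_lt (List.getElem_mem hdlt) hlt'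
        have hce : u.take e = u.take (e-1) ++ [c] := by
          conv_lhs => rw [show e = (e-1) + 1 by omega]
          rw [List.take_succ]
          simp [List.getElem?_eq_getElem hdlt, hc]
        obtain ⟨e', he'1, he'2, he'3⟩ := descent u M e h2 c hce hcmem h3
        exact ih e' he'2 he'1 (by omega) he'3
  obtain ⟨d, hd1, hd2, ⟨hdlt, hfo⟩, hdU⟩ := main i₀ hi₀1 hi₀2 hIU
  refine ⟨u[d-1], d, by omega, by omega, ?_, ?_⟩
  · have h9 : u.idxOf (u[d-1]'hdlt) < firstArchLen u :=
      indexOf_lt_of_mem_take (hfa_mem (u[d-1]'hdlt))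
    omega
  · have hrot_eq : u.rotate d = u.drop d ++ u.take d :=
      List.rotate_eq_drop_append_take (by omega)
    apply le_antisymm
    · have : M ≤ univIndex (u.rotate d) := le_univIndex hdU
      rw [hrot_eq] at this
      exact this
    · have hd3 : d ∈ Finset.range (u.length + 1) := Finset.mem_range.mpr (by omega)
      show univIndex (u.drop d ++ u.take d) ≤ circIndex u
      rw [circIndex]
      exact Finset.le_sup (f := fun i => univIndex (u.drop i ++ u.take i)) hd3
end
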